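/- Let T be a tree of size m with bipartition (A, B), let m'_1, …, m'_a be the degrees of the non-leaf vertices of T lying in A, and let m_1, …, m_b be the degrees of the non-leaf vertices of T lying in B. Then at least one of the following holds: m − (m'_1 + ⋯ + m'_a) ≥ max{m'_1, …, m'_a} − 1, or m − (m_1 + ⋯ + m_b) ≥ max{m_1, …, m_b} − 1. -/

import Mathlib

open Finset

namespace Paper

variable {V E τ : Type*}

/-- Degree of vertex `v` in the edge subset `S` of a multigraph whose edges `e : E`
have endpoints `ends e : Sym2 V`. -/
noncomputable def mdeg (ends : E → Sym2 V) (S : Set E) (v : V) : ℕ :=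
  {e ∈ S | v ∈ ends e}.ncard

/-- The multigraph given by `ends` has no loops. -/
def Loopless (ends : E → Sym2 V) : Prop := ∀ e : E, ¬ (ends e).IsDiag

/-- Edges of `S` with (at least) one end inside `A` and one end outside `A`;
for loopless multigraphs these are the edges with exactly one end in `A`. -/
def crossEdges (ends : E → Sym2 V) (S : Set E) (A : Set V) : Set E :=
  {e ∈ S | (∃ x ∈ ends e, x ∈ A) ∧ ∃ y ∈ ends e, y ∉ A}

/-- The (spanning sub)multigraph with edge set `S` is `k`-edge-connected. -/
def MEdgeConnected (ends : E → Sym2 V) (S : Set E) (k : ℕ) : Prop :=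
  ∀ A : Set V, A.Nonempty → A ≠ Set.univ → k ≤ (crossEdges ends S A).ncard

/-- The simple graph on `V` underlying the edge subset `S`. -/
def toSimple (ends : E → Sym2 V) (S : Set E) : SimpleGraph V where
  Adj u v := u ≠ v ∧ ∃ e ∈ S, ends e = s(u, v)
  symm := by
    constructor
    rintro u v ⟨h, e, he, h2⟩
    exact ⟨h.symm, e, he, by rwa [Sym2.eq_swap]⟩
  loopless := by constructor; rintro v ⟨h, -⟩; exact h rfl

/-- The edge subset `S` forms a spanning tree of the multigraph given by `ends`. -/
def IsSpanningTree [Fintype V] (ends : E → Sym2 V) (S : Set E) : Prop :=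
  (toSimple ends S).Connected ∧ S.ncard = Fintype.card V - 1

/-- The (spanning sub)multigraph with edge set `S` contains `m` pairwise
edge-disjoint spanning trees. -/
def TreeConnected [Fintype V] (ends : E → Sym2 V) (S : Set E) (m : ℕ) : Prop :=
  ∃ Tr : Fin m → Set E, (∀ i, Tr i ⊆ S) ∧
    (Pairwise fun i j => Disjoint (Tr i) (Tr j)) ∧
    ∀ i, IsSpanningTree ends (Tr i)

/-- The edge subset `S` has an orientation (each edge `e ∈ S` gets a tail `o e`,
one of its endpoints) in which every vertex has out-degree at least `l`. -/
def HasOrientationOutdeg (ends : E → Sym2 V) (S : Set E) (l : ℕ) : Prop :=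
  ∃ o : E → V, (∀ e ∈ S, o e ∈ ends e) ∧ ∀ v : V, l ≤ {e ∈ S | o e = v}.ncard

/-- The (spanning sub)multigraph with edge set `S` is `(m, l)`-partition-connected. -/
def PartitionConnected [Fintype V] (ends : E → Sym2 V) (S : Set E) (m l : ℕ) : Prop :=
  ∃ Tm F : Set E, Disjoint Tm F ∧ Tm ∪ F = S ∧
    TreeConnected ends Tm m ∧ HasOrientationOutdeg ends F l

/-- `(X, Y)` is a bipartition of the multigraph given by `ends`. -/
def MBipartition (ends : E → Sym2 V) (X Y : Set V) : Prop :=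
  Disjoint X Y ∧ X ∪ Y = Set.univ ∧ ∀ e : E, ∃ x ∈ X, ∃ y ∈ Y, ends e = s(x, y)

open Classical in
/-- Sum of an integer-valued function over a set of vertices. -/
noncomputable def setSum [Fintype V] (A : Set V) (f : V → ℤ) : ℤ :=
  ∑ v ∈ Finset.univ.filter (· ∈ A), f v

/-! ### Simple graphs -/

/-- Degree of `v` in a simple graph. -/
noncomputable def sdeg (G : SimpleGraph V) (v : V) : ℕ := (G.neighborSet v).ncard

/-- A simple graph is `k`-edge-connected. -/
def SEdgeConnected (G : SimpleGraph V) (k : ℕ) : Prop :=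
  ∀ A : Set V, A.Nonempty → A ≠ Set.univ →
    k ≤ {e ∈ G.edgeSet | (∃ x ∈ e, x ∈ A) ∧ ∃ y ∈ e, y ∉ A}.ncard

/-- A simple graph is `(m, l)`-partition-connected. -/
def SPartitionConnected [Fintype V] (G : SimpleGraph V) (m l : ℕ) : Prop :=
  PartitionConnected (fun e : G.edgeSet => (e : Sym2 V)) Set.univ m l

/-- `A` is one of the two partite sets of (a bipartition of) `G`. -/
def BipartitionSide (G : SimpleGraph V) (A : Set V) : Prop :=
  ∀ a b, G.Adj a b → (a ∈ A ↔ b ∉ A)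

/-- `f` maps `T` onto a copy of `T` inside `G` (a subgraph isomorphic to `T`). -/
def IsCopy (T : SimpleGraph τ) (G : SimpleGraph V) (f : τ → V) : Prop :=
  Function.Injective f ∧ ∀ a b, T.Adj a b → G.Adj (f a) (f b)

/-- Edge set of the copy of `T` given by `f`. -/
def copyEdges (T : SimpleGraph τ) (f : τ → V) : Set (Sym2 V) := Sym2.map f '' T.edgeSet

/-- `G` admits a `T`-edge-decomposition: its edge set is partitioned into
edge sets of copies of `T`. -/
def HasTDecomposition (T : SimpleGraph τ) (G : SimpleGraph V) : Prop :=
  ∃ (n : ℕ) (f : Fin n → τ → V),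
    (∀ i, IsCopy T G (f i)) ∧
    (Pairwise fun i j => Disjoint (copyEdges T (f i)) (copyEdges T (f j))) ∧
    ⋃ i, copyEdges T (f i) = G.edgeSet

open Classical in
/-- The non-leaf vertices of `T` lying in `A`. -/
noncomputable def nonLeaf [Fintype τ] (T : SimpleGraph τ) (A : Set τ) : Finset τ :=
  Finset.univ.filter (fun v => v ∈ A ∧ 2 ≤ sdeg T v)

/-- The subgraph of `G` induced by `X`, viewed as a graph on the same vertex set. -/
def inducedOn (G : SimpleGraph V) (X : Set V) : SimpleGraph V where
  Adj u v := G.Adj u v ∧ u ∈ X ∧ v ∈ X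
  symm := by constructor; rintro u v ⟨h, hu, hv⟩; exact ⟨h.symm, hv, hu⟩
  loopless := by constructor; rintro v ⟨h, -⟩; exact G.ne_of_adj h rfl

section Aux

open Classical

lemma sdeg_eq_degree [Fintype τ] (T : SimpleGraph τ) (v : τ) :
    sdeg T v = T.degree v := by
  rw [sdeg, Set.ncard_eq_toFinset_card', Set.toFinset_card,
    SimpleGraph.card_neighborSet_eq_degree]

/-- One-sided handshake: in a graph with bipartition side `A`, the sum of degrees
of vertices in `A` equals the number of edges. -/
lemma side_sum [Fintype τ] (T : SimpleGraph τ) (A : Set τ) [DecidablePred (· ∈ A)]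
    (hA : BipartitionSide T A) :
    ∑ v ∈ univ.filter (· ∈ A), T.degree v = T.edgeFinset.card := by
  have h1 : ∀ v : τ, T.degree v = (T.edgeFinset.filter (fun e => v ∈ e)).card := by
    intro v
    rw [← SimpleGraph.card_incidenceFinset_eq_degree, SimpleGraph.incidenceFinset_eq_filter]
  calc ∑ v ∈ univ.filter (· ∈ A), T.degree v
      = ∑ v ∈ univ.filter (· ∈ A), ∑ e ∈ T.edgeFinset, (if v ∈ e then 1 else 0) := by
        refine Finset.sum_congr rfl fun v _ => ?_
        rw [h1, Finset.card_filter]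
    _ = ∑ e ∈ T.edgeFinset, ∑ v ∈ univ.filter (· ∈ A), (if v ∈ e then 1 else 0) :=
        Finset.sum_comm
    _ = ∑ e ∈ T.edgeFinset, ((univ.filter (· ∈ A)).filter (fun v => v ∈ e)).card := by
        refine Finset.sum_congr rfl fun e _ => ?_
        rw [Finset.card_filter]
    _ = ∑ _e ∈ T.edgeFinset, 1 := by
        refine Finset.sum_congr rfl fun e he => ?_
        induction e using Sym2.ind with
        | _ x y =>
          rw [SimpleGraph.mem_edgeFinset, SimpleGraph.mem_edgeSet] at he
          have hne : x ≠ y := he.ne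
          have hxy : x ∈ A ↔ y ∉ A := hA x y he
          rw [Finset.card_eq_one]
          by_cases hx : x ∈ A
          · refine ⟨x, ?_⟩
            ext v
            simp only [Finset.mem_filter, Finset.mem_univ, true_and, Sym2.mem_iff,
              Finset.mem_singleton]
            constructor
            · rintro ⟨hv, rfl | rfl⟩
              · rfl
              · exact absurd hv (hxy.mp hx)
            · rintro rfl; exact ⟨hx, Or.inl rfl⟩
          · have hy : y ∈ A := by
              by_contra hy
              exact hx (hxy.mpr hy)
            refine ⟨y, ?_⟩
            ext v
            simp only [Finset.mem_filter, Finset.mem_univ, true_and, Sym2.mem_iff,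
              Finset.mem_singleton]
            constructor
            · rintro ⟨hv, rfl | rfl⟩
              · exact absurd hv hx
              · rfl
            · rintro rfl; exact ⟨hy, Or.inr rfl⟩
    _ = T.edgeFinset.card := by rw [Finset.sum_const, smul_eq_mul, mul_one]

end Aux

/-- For a tree `T` of size `m` with bipartition `(A, Aᶜ)`, either
`m - ∑ m'_i ≥ max m'_i - 1` for the degrees `m'_i` of the non-leaf vertices in `A`, or
`m - ∑ m_i ≥ max m_i - 1` for the degrees `m_i` of the non-leaf vertices in `Aᶜ`. -/
theorem stmt6 {τ : Type*} [Fintype τ] (T : SimpleGraph τ) (hT : T.IsTree)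
    (m : ℕ) (hsize : T.edgeSet.ncard = m)
    (A : Set τ) (hA : BipartitionSide T A) :
    ((((nonLeaf T A).sup (sdeg T) : ℕ) : ℤ) - 1 ≤
        (m : ℤ) - ∑ v ∈ nonLeaf T A, (sdeg T v : ℤ)) ∨
    ((((nonLeaf T Aᶜ).sup (sdeg T) : ℕ) : ℤ) - 1 ≤
        (m : ℤ) - ∑ v ∈ nonLeaf T Aᶜ, (sdeg T v : ℤ)) := by
  classical
  -- restate sdeg as degree
  have hmemNL : ∀ (B : Set τ) (v : τ), v ∈ nonLeaf T B ↔ v ∈ B ∧ 2 ≤ T.degree v := by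
    intro B v; simp [nonLeaf, sdeg_eq_degree]
  have hsumNL : ∀ (B : Set τ),
      ∑ v ∈ nonLeaf T B, (sdeg T v : ℤ) = ∑ v ∈ nonLeaf T B, (T.degree v : ℤ) :=
    fun B => Finset.sum_congr rfl fun v _ => by rw [sdeg_eq_degree]
  have hsupNL : ∀ (B : Set τ), (nonLeaf T B).sup (sdeg T) = (nonLeaf T B).sup (fun v => T.degree v) := by
    intro B
    exact Finset.sup_congr rfl fun v _ => sdeg_eq_degree T v
  rw [hsumNL, hsumNL, hsupNL, hsupNL]
  -- trivial cases: one of the sides has no non-leaf vertex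
  by_cases hNA : nonLeaf T A = ∅
  · left; rw [hNA]
    simp only [Finset.sup_empty, Finset.sum_empty, bot_eq_zero, Nat.cast_zero]
    omega
  by_cases hNB : nonLeaf T Aᶜ = ∅
  · right; rw [hNB]
    simp only [Finset.sup_empty, Finset.sum_empty, bot_eq_zero, Nat.cast_zero]
    omega
  -- main case
  have hA' : BipartitionSide T Aᶜ := by
    intro a b hab
    have := hA a b hab
    simp only [Set.mem_compl_iff]
    tauto
  obtain ⟨u, hu, hdu⟩ :=
    Finset.exists_mem_eq_sup (nonLeaf T A) (Finset.nonempty_of_ne_empty hNA) (fun v => T.degree v)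
  obtain ⟨w, hw, hdw⟩ :=
    Finset.exists_mem_eq_sup (nonLeaf T Aᶜ) (Finset.nonempty_of_ne_empty hNB) (fun v => T.degree v)
  rw [hmemNL] at hu hw
  -- basic graph facts
  have hconn : T.Connected := hT.isConnected
  have hmcard : T.edgeFinset.card = m := by
    rw [← hsize, Set.ncard_eq_toFinset_card', SimpleGraph.edgeFinset]
  have hncard : Fintype.card τ = m + 1 := by
    have h1 := hT.card_edgeFinset
    have h2 : 1 ≤ Fintype.card τ := Fintype.card_pos_iff.mpr hconn.nonempty
    omega
  -- card τ ≥ 2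
  have hcard2 : 1 < Fintype.card τ := by
    obtain ⟨x, hxu⟩ : ∃ x, T.Adj u x := by
      rw [← SimpleGraph.degree_pos_iff_exists_adj]; omega
    exact Fintype.one_lt_card_iff_nontrivial.mpr ⟨⟨u, x, (T.ne_of_adj hxu)⟩⟩
  -- minimum degree is 1
  have mindeg : ∀ v : τ, 1 ≤ T.degree v := by
    intro v
    obtain ⟨x, hxv⟩ := Fintype.exists_ne_of_one_lt_card hcard2 v
    obtain ⟨p⟩ := hconn.preconnected v x
    have hadj : ∃ y, T.Adj v y := by
      cases p with
      | nil => exact absurd rfl hxv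
      | cons h q => exact ⟨_, h⟩
    exact (T.degree_pos_iff_exists_adj v).mpr hadj
  -- leaf sets
  set LA := univ.filter (fun v => v ∈ A ∧ T.degree v = 1) with hLA
  set LB := univ.filter (fun v => v ∈ Aᶜ ∧ T.degree v = 1) with hLB
  set Lf := univ.filter (fun v => T.degree v = 1) with hLf
  -- side decompositions
  have eA : (∑ v ∈ nonLeaf T A, T.degree v) + LA.card = m := by
    have hsplit : univ.filter (· ∈ A) = nonLeaf T A ∪ LA := by
      ext v
      simp only [Finset.mem_filter, Finset.mem_univ, true_and, Finset.mem_union, hLA,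
        hmemNL]
      have := mindeg v
      constructor
      · intro hv
        rcases Nat.lt_or_ge (T.degree v) 2 with h | h
        · right; exact ⟨hv, by omega⟩
        · left; exact ⟨hv, h⟩
      · rintro (⟨hv, -⟩ | ⟨hv, -⟩) <;> exact hv
    have hdisj : Disjoint (nonLeaf T A) LA := by
      rw [Finset.disjoint_left]
      intro v hv hv'
      rw [hmemNL] at hv
      simp only [hLA, Finset.mem_filter] at hv'
      omega
    have hLAsum : ∑ v ∈ LA, T.degree v = LA.card := by
      rw [Finset.card_eq_sum_ones]
      refine Finset.sum_congr rfl fun v hv => ?_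
      simp only [hLA, Finset.mem_filter] at hv
      exact hv.2.2
    rw [← hLAsum, ← Finset.sum_union hdisj, ← hsplit, side_sum T A hA, hmcard]
  have eB : (∑ v ∈ nonLeaf T Aᶜ, T.degree v) + LB.card = m := by
    have hsplit : univ.filter (· ∈ Aᶜ) = nonLeaf T Aᶜ ∪ LB := by
      ext v
      simp only [Finset.mem_filter, Finset.mem_univ, true_and, Finset.mem_union, hLB,
        hmemNL]
      have := mindeg v
      constructor
      · intro hv
        rcases Nat.lt_or_ge (T.degree v) 2 with h | h
        · right; exact ⟨hv, by omega⟩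
        · left; exact ⟨hv, h⟩
      · rintro (⟨hv, -⟩ | ⟨hv, -⟩) <;> exact hv
    have hdisj : Disjoint (nonLeaf T Aᶜ) LB := by
      rw [Finset.disjoint_left]
      intro v hv hv'
      rw [hmemNL] at hv
      simp only [hLB, Finset.mem_filter] at hv'
      omega
    have hLBsum : ∑ v ∈ LB, T.degree v = LB.card := by
      rw [Finset.card_eq_sum_ones]
      refine Finset.sum_congr rfl fun v hv => ?_
      simp only [hLB, Finset.mem_filter] at hv
      exact hv.2.2
    rw [← hLBsum, ← Finset.sum_union hdisj, ← hsplit, side_sum T Aᶜ hA', hmcard]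
  -- total handshake split into the three parts
  have hdisjAB : Disjoint (nonLeaf T A) (nonLeaf T Aᶜ) := by
    rw [Finset.disjoint_left]
    intro v hv hv'
    rw [hmemNL] at hv hv'
    exact hv'.1 hv.1
  have hdisjABL : Disjoint (nonLeaf T A ∪ nonLeaf T Aᶜ) Lf := by
    rw [Finset.disjoint_left]
    intro v hv hv'
    simp only [hLf, Finset.mem_filter] at hv'
    rw [Finset.mem_union, hmemNL, hmemNL] at hv
    omega
  have hunivsplit : (univ : Finset τ) = (nonLeaf T A ∪ nonLeaf T Aᶜ) ∪ Lf := by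
    ext v
    simp only [Finset.mem_univ, true_iff, Finset.mem_union, hLf, Finset.mem_filter,
      hmemNL, true_and]
    have := mindeg v
    rcases Nat.lt_or_ge (T.degree v) 2 with h | h
    · right; omega
    · left
      by_cases hv : v ∈ A
      · exact Or.inl ⟨hv, h⟩
      · exact Or.inr ⟨hv, h⟩
  have eTot : (∑ v ∈ nonLeaf T A, T.degree v) + (∑ v ∈ nonLeaf T Aᶜ, T.degree v)
      + Lf.card = 2 * m := by
    have h := SimpleGraph.sum_degrees_eq_twice_card_edges T
    rw [hmcard] at h
    have hLfsum : ∑ v ∈ Lf, T.degree v = Lf.card := by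
      rw [Finset.card_eq_sum_ones]
      refine Finset.sum_congr rfl fun v hv => ?_
      simp only [hLf, Finset.mem_filter] at hv
      exact hv.2
    rw [← hLfsum, ← Finset.sum_union hdisjAB, ← Finset.sum_union hdisjABL, ← hunivsplit]
    exact h
  have eCard : (nonLeaf T A).card + (nonLeaf T Aᶜ).card + Lf.card = m + 1 := by
    rw [← hncard, ← Finset.card_univ, hunivsplit, Finset.card_union_of_disjoint hdisjABL,
      Finset.card_union_of_disjoint hdisjAB]
  have eL : LA.card + LB.card = Lf.card := by
    have hdisjL : Disjoint LA LB := by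
      rw [Finset.disjoint_left]
      intro v hv hv'
      simp only [hLA, Finset.mem_filter] at hv
      simp only [hLB, Finset.mem_filter, Set.mem_compl_iff] at hv'
      exact hv'.2.1 hv.2.1
    rw [← Finset.card_union_of_disjoint hdisjL]
    congr 1
    ext v
    simp only [hLA, hLB, hLf, Finset.mem_union, Finset.mem_filter, Finset.mem_univ,
      true_and, Set.mem_compl_iff]
    tauto
  -- lower bounds for the non-leaf degree sums
  have boundA : (((nonLeaf T A).sup (fun v => T.degree v) : ℕ) : ℤ) - 2 + 2 * (nonLeaf T A).card ≤
      ∑ v ∈ nonLeaf T A, (T.degree v : ℤ) := by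
    have h1 : ∑ v ∈ nonLeaf T A, ((T.degree v : ℤ) - 2) ≥ (T.degree u : ℤ) - 2 := by
      refine Finset.single_le_sum (f := fun v => (T.degree v : ℤ) - 2) ?_ ?_
      · intro v hv
        rw [hmemNL] at hv
        have := hv.2
        show (0:ℤ) ≤ (T.degree v : ℤ) - 2
        omega
      · rw [hmemNL]; exact hu
    rw [Finset.sum_sub_distrib, Finset.sum_const, nsmul_eq_mul] at h1
    rw [hdu]
    linarith
  have boundB : (((nonLeaf T Aᶜ).sup (fun v => T.degree v) : ℕ) : ℤ) - 2 + 2 * (nonLeaf T Aᶜ).card ≤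
      ∑ v ∈ nonLeaf T Aᶜ, (T.degree v : ℤ) := by
    have h1 : ∑ v ∈ nonLeaf T Aᶜ, ((T.degree v : ℤ) - 2) ≥ (T.degree w : ℤ) - 2 := by
      refine Finset.single_le_sum (f := fun v => (T.degree v : ℤ) - 2) ?_ ?_
      · intro v hv
        rw [hmemNL] at hv
        have := hv.2
        show (0:ℤ) ≤ (T.degree v : ℤ) - 2
        omega
      · rw [hmemNL]; exact hw
    rw [Finset.sum_sub_distrib, Finset.sum_const, nsmul_eq_mul] at h1
    rw [hdw]
    linarith
  -- final arithmetic
  by_contra hcon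
  push_neg at hcon
  obtain ⟨h1, h2⟩ := hcon
  have eA' : (∑ v ∈ nonLeaf T A, (T.degree v : ℤ)) + LA.card = m := by
    exact_mod_cast congrArg (Nat.cast : ℕ → ℤ) eA
  have eB' : (∑ v ∈ nonLeaf T Aᶜ, (T.degree v : ℤ)) + LB.card = m := by
    exact_mod_cast congrArg (Nat.cast : ℕ → ℤ) eB
  have eTot' : (∑ v ∈ nonLeaf T A, (T.degree v : ℤ))
      + (∑ v ∈ nonLeaf T Aᶜ, (T.degree v : ℤ)) + Lf.card = 2 * m := by
    exact_mod_cast congrArg (Nat.cast : ℕ → ℤ) eTot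
  have eCard' : ((nonLeaf T A).card : ℤ) + (nonLeaf T Aᶜ).card + Lf.card = m + 1 := by
    exact_mod_cast congrArg (Nat.cast : ℕ → ℤ) eCard
  have eL' : (LA.card : ℤ) + LB.card = Lf.card := by
    exact_mod_cast congrArg (Nat.cast : ℕ → ℤ) eL
  linarith

end Paper
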